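/- Let 0 < ε < 1 and d ≥ 2, let M be the noisy projective measurement in dimension d, let ψ = (1/√d)·(1,…,1) ∈ ℂ^d be the unbiased state, and let K be a valid decomposition of M. For a permutation σ of Fin d let P_σ denote the associated permutation matrix (so that P_σᵀ · M (σ x) · P_σ = M x for all x). Define the permutation-averaged family K^σ by K^σ x j = (1/d!) • ∑_{σ ∈ Equiv.Perm (Fin d)} P_σᵀ · (K (σ x) (σ j)) · P_σ. Then K^σ is a valid decomposition of M, and its objective at ψ equals that of K: ∑_x ⟪ψ, (K^σ x x)·ψ⟫ = ∑_x ⟪ψ, (K x x)·ψ⟫. -/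

import Mathlib

open Matrix ComplexOrder

noncomputable section

/-- `K` is a valid decomposition of the POVM `M`. -/
def IsDecomp {m d : ℕ} (M : Fin m → Matrix (Fin d) (Fin d) ℂ)
    (K : Fin m → Fin m → Matrix (Fin d) (Fin d) ℂ) : Prop :=
  (∀ x j, (K x j).PosSemidef) ∧
  (∀ j, (d : ℂ) • ∑ x, K x j = (∑ x, (K x j).trace) • (1 : Matrix (Fin d) (Fin d) ℂ)) ∧
  (∀ x, ∑ j, K x j = M x)

/-- Eve's objective for the decomposition `K` and the state `φ`:
`∑_j ⟪φ, (K j j) φ⟫`. -/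
def objective {m d : ℕ} (K : Fin m → Fin m → Matrix (Fin d) (Fin d) ℂ)
    (φ : Fin d → ℂ) : ℝ :=
  ∑ j, (star φ ⬝ᵥ (K j j).mulVec φ).re

/-- The noisy projective measurement in dimension `d` with noise parameter `ε`. -/
def noisyM (d : ℕ) (ε : ℝ) : Fin d → Matrix (Fin d) (Fin d) ℂ :=
  fun x => ((1 - ε : ℝ) : ℂ) • Matrix.single x x 1 + ((ε / d : ℝ) : ℂ) • 1

namespace PermAvgAux

variable {d : ℕ}

/-- The permutation matrix. -/
def Pm (σ : Equiv.Perm (Fin d)) : Matrix (Fin d) (Fin d) ℂ :=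
  fun i j => if i = σ j then 1 else 0

lemma Pm_conj (σ : Equiv.Perm (Fin d)) (A : Matrix (Fin d) (Fin d) ℂ) :
    (Pm σ)ᵀ * A * Pm σ = A.submatrix σ σ := by
  ext i j
  simp only [Matrix.mul_apply, Pm, Matrix.transpose_apply, Matrix.submatrix_apply,
    ite_mul, one_mul, zero_mul, mul_ite, mul_one, mul_zero]
  simp

lemma sum_submatrix {ι : Type*} (s : Finset ι) (f : ι → Matrix (Fin d) (Fin d) ℂ)
    (σ : Equiv.Perm (Fin d)) :
    ∑ x ∈ s, (f x).submatrix σ σ = (∑ x ∈ s, f x).submatrix σ σ := by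
  ext i k
  simp [Matrix.sum_apply]

lemma trace_submatrix (σ : Equiv.Perm (Fin d)) (A : Matrix (Fin d) (Fin d) ℂ) :
    (A.submatrix σ σ).trace = A.trace := by
  simp only [Matrix.trace, Matrix.diag, Matrix.submatrix_apply]
  exact Equiv.sum_comp σ fun i => A i i

lemma noisyM_submatrix (ε : ℝ) (σ : Equiv.Perm (Fin d)) (x : Fin d) :
    (noisyM d ε (σ x)).submatrix σ σ = noisyM d ε x := by
  ext i j
  simp only [noisyM, Matrix.submatrix_apply, Matrix.add_apply, Matrix.smul_apply,
    Matrix.single, Matrix.one_apply, Matrix.of_apply, EmbeddingLike.apply_eq_iff_eq,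
    smul_eq_mul]

lemma psd_smul {A : Matrix (Fin d) (Fin d) ℂ} (hA : A.PosSemidef) {r : ℝ} (hr : 0 ≤ r) :
    ((r : ℂ) • A).PosSemidef := by
  refine ⟨?_, fun x => ?_⟩
  · unfold Matrix.IsHermitian
    rw [Matrix.conjTranspose_smul, hA.1]
    simp
  · have := hA.2 x
    exact (hA.smul (Complex.zero_le_real.2 hr)).2 x

/-- The objective value as a linear map. -/
def valL (ψ : Fin d → ℂ) : Matrix (Fin d) (Fin d) ℂ →ₗ[ℂ] ℂ where
  toFun A := star ψ ⬝ᵥ A.mulVec ψ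
  map_add' A B := by simp [Matrix.add_mulVec, dotProduct_add]
  map_smul' c A := by simp [Matrix.smul_mulVec, dotProduct_smul]

lemma valL_submatrix (c : ℂ) (σ : Equiv.Perm (Fin d)) (A : Matrix (Fin d) (Fin d) ℂ) :
    valL (fun _ => c) (A.submatrix σ σ) = valL (fun _ => c) A := by
  simp only [valL, LinearMap.coe_mk, AddHom.coe_mk, dotProduct, Matrix.mulVec,
    Matrix.submatrix_apply, Pi.star_apply]
  rw [← Equiv.sum_comp σ (fun i => star c * ∑ j, A i j * c)]
  refine Finset.sum_congr rfl fun i _ => ?_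
  congr 1
  exact Equiv.sum_comp σ fun j => A (σ i) j * c

end PermAvgAux

open PermAvgAux in
theorem noisy_projective_permutation_averaging
    {d : ℕ} (hd : 2 ≤ d) (ε : ℝ) (hε0 : 0 < ε) (hε1 : ε < 1)
    (K : Fin d → Fin d → Matrix (Fin d) (Fin d) ℂ) (hK : IsDecomp (noisyM d ε) K) :
    let P : Equiv.Perm (Fin d) → Matrix (Fin d) (Fin d) ℂ :=
      fun σ i j => if i = σ j then 1 else 0
    let Kσ : Fin d → Fin d → Matrix (Fin d) (Fin d) ℂ := fun x j =>
      ((d.factorial : ℂ))⁻¹ • ∑ σ : Equiv.Perm (Fin d), (P σ)ᵀ * K (σ x) (σ j) * P σ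
    let ψ : Fin d → ℂ := fun _ => ((Real.sqrt d : ℂ))⁻¹
    (∀ σ x, (P σ)ᵀ * noisyM d ε (σ x) * P σ = noisyM d ε x) ∧
    IsDecomp (noisyM d ε) Kσ ∧
    ∑ x, (star ψ ⬝ᵥ (Kσ x x).mulVec ψ).re = ∑ x, (star ψ ⬝ᵥ (K x x).mulVec ψ).re := by
  intro P Kσ ψ
  have hP : ∀ σ, P σ = Pm σ := fun σ => rfl
  have hfact : (d.factorial : ℂ) ≠ 0 :=
    Nat.cast_ne_zero.2 (Nat.factorial_ne_zero d)
  have hKσ : ∀ x j, Kσ x j =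
      ((d.factorial : ℂ))⁻¹ • ∑ σ : Equiv.Perm (Fin d), (K (σ x) (σ j)).submatrix σ σ := by
    intro x j
    show ((d.factorial : ℂ))⁻¹ • ∑ σ : Equiv.Perm (Fin d), (P σ)ᵀ * K (σ x) (σ j) * P σ = _
    congr 1
    refine Finset.sum_congr rfl fun σ _ => ?_
    rw [hP, Pm_conj]
  have hMinv : ∀ (σ : Equiv.Perm (Fin d)) x,
      (P σ)ᵀ * noisyM d ε (σ x) * P σ = noisyM d ε x := by
    intro σ x
    rw [hP, Pm_conj, noisyM_submatrix]
  have hcard : ((Finset.univ : Finset (Equiv.Perm (Fin d))).card : ℂ) = (d.factorial : ℂ) := by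
    rw [Finset.card_univ, Fintype.card_perm, Fintype.card_fin]
  refine ⟨hMinv, ⟨?_, ?_, ?_⟩, ?_⟩
  · -- PSD
    intro x j
    rw [hKσ]
    have hsum : (∑ σ : Equiv.Perm (Fin d), (K (σ x) (σ j)).submatrix σ σ).PosSemidef := by
      classical
      refine Finset.sum_induction _ _ (fun a b ha hb => ha.add hb) Matrix.PosSemidef.zero
        fun σ _ => (hK.1 (σ x) (σ j)).submatrix σ
    have hco : ((d.factorial : ℂ))⁻¹ = Complex.ofReal ((d.factorial : ℝ)⁻¹) := by
      push_cast; ring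
    have hr : (0 : ℝ) ≤ ((d.factorial : ℝ))⁻¹ := by positivity
    rw [hco]
    exact psd_smul hsum hr
  · -- normalization condition
    intro j
    have hsum : ∑ x, Kσ x j = ((d.factorial : ℂ))⁻¹ •
        ∑ σ : Equiv.Perm (Fin d), (∑ x, K x (σ j)).submatrix σ σ := by
      simp only [hKσ]
      rw [← Finset.smul_sum, Finset.sum_comm]
      congr 1
      refine Finset.sum_congr rfl fun σ _ => ?_
      rw [sum_submatrix]
      exact congrArg (fun A : Matrix (Fin d) (Fin d) ℂ => A.submatrix σ σ)
        (Equiv.sum_comp σ fun x => K x (σ j))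
    have htr : ∑ x, (Kσ x j).trace = ((d.factorial : ℂ))⁻¹ *
        ∑ σ : Equiv.Perm (Fin d), ∑ x, (K x (σ j)).trace := by
      simp only [hKσ, Matrix.trace_smul, Matrix.trace_sum, trace_submatrix, smul_eq_mul,
        ← Finset.mul_sum]
      congr 1
      rw [Finset.sum_comm]
      refine Finset.sum_congr rfl fun σ _ => ?_
      exact Equiv.sum_comp σ fun x => (K x (σ j)).trace
    have hterm : ∀ σ : Equiv.Perm (Fin d),
        (d : ℂ) • (∑ x, K x (σ j)).submatrix σ σ
          = (∑ x, (K x (σ j)).trace) • (1 : Matrix (Fin d) (Fin d) ℂ) := by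
      intro σ
      ext i k
      have h := congrFun (congrFun (hK.2.1 (σ j)) (σ i)) (σ k)
      simp only [Matrix.smul_apply, Matrix.one_apply, smul_eq_mul,
        EmbeddingLike.apply_eq_iff_eq] at h
      simpa [Matrix.smul_apply, Matrix.submatrix_apply, Matrix.one_apply] using h
    rw [hsum, htr, smul_comm, Finset.smul_sum]
    simp only [hterm]
    rw [← Finset.sum_smul, smul_smul]
  · -- completeness
    intro x
    have hstep : ∑ j, Kσ x j = ((d.factorial : ℂ))⁻¹ •
        ∑ _σ : Equiv.Perm (Fin d), noisyM d ε x := by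
      simp only [hKσ]
      rw [← Finset.smul_sum, Finset.sum_comm]
      congr 1
      refine Finset.sum_congr rfl fun σ _ => ?_
      rw [sum_submatrix, Equiv.sum_comp σ (fun j => K (σ x) j), hK.2.2 (σ x), noisyM_submatrix]
    rw [hstep, Finset.sum_const, ← Nat.cast_smul_eq_nsmul ℂ, smul_smul, hcard,
      inv_mul_cancel₀ hfact, one_smul]
  · -- objective
    have hval : ∀ x j, star ψ ⬝ᵥ (K x j).mulVec ψ = valL ψ (K x j) := fun _ _ => rfl
    have key : ∀ x, star ψ ⬝ᵥ (Kσ x x).mulVec ψ =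
        ((d.factorial : ℂ))⁻¹ * ∑ σ : Equiv.Perm (Fin d), valL ψ (K (σ x) (σ x)) := by
      intro x
      show valL ψ (Kσ x x) = _
      rw [hKσ, LinearMap.map_smul, map_sum, smul_eq_mul]
      congr 1
      exact Finset.sum_congr rfl fun σ _ => valL_submatrix _ σ _
    calc ∑ x, (star ψ ⬝ᵥ (Kσ x x).mulVec ψ).re
        = (∑ x, star ψ ⬝ᵥ (Kσ x x).mulVec ψ).re := (Complex.re_sum _ _).symm
      _ = (∑ x, star ψ ⬝ᵥ (K x x).mulVec ψ).re := by
          congr 1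
          simp only [key]
          rw [← Finset.mul_sum, Finset.sum_comm]
          rw [show (∑ σ : Equiv.Perm (Fin d), ∑ x, valL ψ (K (σ x) (σ x)))
              = ∑ _σ : Equiv.Perm (Fin d), ∑ x, valL ψ (K x x) from
            Finset.sum_congr rfl fun σ _ => Equiv.sum_comp σ fun x => valL ψ (K x x)]
          rw [Finset.sum_const, nsmul_eq_mul, hcard, ← mul_assoc,
            inv_mul_cancel₀ hfact, one_mul]
          exact Finset.sum_congr rfl fun x _ => (hval x x).symm
      _ = ∑ x, (star ψ ⬝ᵥ (K x x).mulVec ψ).re := Complex.re_sum _ _
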